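/- If Q is a TM-ideal of a locally geometric poset P with rk(Q) = rk(P) − 1, then for any atom a ∈ A(P)∖A(Q) there is a poset isomorphism Q ≃ P_{≥a}, given by x ↦ x ∨ a. -/

import Mathlib

open scoped Classical
open Polynomial

noncomputable section

namespace PosetArr

/-- The rank of an element of a poset: the length of the longest chain
strictly below it. In a ranked poset this is the common length of all maximal
chains with greatest element `x`. -/
noncomputable def rk {α : Type*} [Preorder α] (x : α) : ℕ :=
  (Set.chainHeight (Set.Iio x) (· < ·)).toNat

/-- The rank of a (finite) poset: the maximal rank of an element. -/
noncomputable def prk (α : Type*) [Preorder α] [Fintype α] : ℕ :=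
  Finset.univ.sup (rk (α := α))

/-- A finite poset is ranked iff covering relations increase `rk` by one;
equivalently, for every `x` all maximal chains with greatest element `x`
have the same length. -/
def IsRanked (α : Type*) [Preorder α] : Prop :=
  ∀ x y : α, x ⋖ y → rk y = rk x + 1

/-- The set of atoms (elements of rank 1) of a poset. -/
def atoms (α : Type*) [Preorder α] : Set α := {x : α | rk x = 1}

/-- `joinSet T` is the join `⋁ T`: the set of minimal upper bounds of `T`. -/
def joinSet {α : Type*} [PartialOrder α] (T : Set α) : Set α :=
  {z | z ∈ upperBounds T ∧ ∀ w ∈ upperBounds T, w ≤ z → w = z}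

/-- `meetSet T` is the meet `⋀ T`: the set of maximal lower bounds of `T`. -/
def meetSet {α : Type*} [PartialOrder α] (T : Set α) : Set α :=
  {z | z ∈ lowerBounds T ∧ ∀ w ∈ lowerBounds T, z ≤ w → w = z}

/-- A poset is a lattice if any two elements have a unique minimal upper
bound and a unique maximal lower bound. -/
def IsLatticePoset (α : Type*) [PartialOrder α] : Prop :=
  ∀ x y : α, (∃! z, z ∈ joinSet {x, y}) ∧ (∃! z, z ∈ meetSet {x, y})

/-- A (finite) lattice is geometric if for all `x, y`: `y` covers `x` iff
there is an atom `a` with `a ≰ x` and `y = x ∨ a`. -/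
def IsGeomLattice (α : Type*) [PartialOrder α] : Prop :=
  IsLatticePoset α ∧
    ∀ x y : α, x ⋖ y ↔ ∃ a : α, a ∈ atoms α ∧ ¬a ≤ x ∧ y ∈ joinSet {x, a}

/-- A finite ranked poset is locally geometric if every lower interval
`P_{≤ x}` is a geometric lattice. -/
def IsLocallyGeometric (α : Type*) [PartialOrder α] : Prop :=
  IsRanked α ∧ ∀ x : α, IsGeomLattice {y : α // y ≤ x}

/-- The Möbius function of a finite poset. -/
noncomputable def mob {α : Type*} [PartialOrder α] [Fintype α] (a b : α) : ℤ :=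
  if a = b then 1
  else if a < b then
    - ∑ c ∈ (Finset.univ.filter (fun c : α => a ≤ c ∧ c < b)).attach, mob a c.1
  else 0
termination_by (Finset.univ.filter (fun c : α => c ≤ b)).card
decreasing_by
  have hc := c.2
  simp only [Finset.mem_filter, Finset.mem_univ, true_and] at hc
  apply Finset.card_lt_card
  constructor
  · intro z hz
    simp only [Finset.mem_filter, Finset.mem_univ, true_and] at hz ⊢
    exact hz.trans hc.2.le
  · intro hsub
    have hb : b ∈ Finset.univ.filter (fun z : α => z ≤ b) := by
      simp
    have := hsub hb
    simp only [Finset.mem_filter, Finset.mem_univ, true_and] at this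
    exact absurd (lt_of_le_of_lt this hc.2) (lt_irrefl _)

/-- The characteristic polynomial of a finite ranked poset with `0̂`:
`χ_P(t) = ∑_x μ(0̂,x) t^(rk(P) - rk(x))`. -/
noncomputable def charPoly (α : Type*) [PartialOrder α] [Fintype α] [OrderBot α] :
    Polynomial ℤ :=
  ∑ x : α, Polynomial.C (mob ⊥ x) * Polynomial.X ^ (prk α - rk x)

/-- The subposet of `P` generated by a set `B` of atoms: the minimal element
together with all joins of subsets of `B`. -/
def genSub {α : Type*} [PartialOrder α] [OrderBot α] (B : Set α) : Set α :=
  insert ⊥ {z | ∃ T ⊆ B, z ∈ joinSet T}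

instance upperOrderBot {α : Type*} [PartialOrder α] (a : α) :
    OrderBot {y : α // a ≤ y} where
  bot := ⟨a, le_rfl⟩
  bot_le y := y.2

instance genSubOrderBot {α : Type*} [PartialOrder α] [OrderBot α] (B : Set α) :
    OrderBot {y : α // y ∈ genSub B} where
  bot := ⟨⊥, Set.mem_insert _ _⟩
  bot_le y := bot_le

/-- `OrderBot` structure on a down-set containing `⊥`. -/
def subsetOrderBot {α : Type*} [PartialOrder α] [OrderBot α] {Q : Set α}
    (h : ⊥ ∈ Q) : OrderBot {y : α // y ∈ Q} where
  bot := ⟨⊥, h⟩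
  bot_le y := bot_le

/-- The class of inductive posets: the smallest class of locally geometric
posets containing the one-element poset and closed under the addition step:
`P ∈ IP` whenever there is an atom `a` such that `P'' = P_{≥a} ∈ IP`,
`P' = P(A(P) \ {a}) ∈ IP` and `χ_{P''} ∣ χ_{P'}`. -/
inductive IsInductivePoset :
    ∀ (β : Type) (po : PartialOrder β) (fin : Fintype β) (bo : OrderBot β), Prop where
  | triv (β : Type) [po : PartialOrder β] [fin : Fintype β] [bo : OrderBot β]
      (h : ∀ x : β, x = ⊥) : IsInductivePoset β po fin bo
  | step (β : Type) [po : PartialOrder β] [fin : Fintype β] [bo : OrderBot β]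
      (hLG : IsLocallyGeometric β) (a : β) (ha : a ∈ atoms β)
      (hres : IsInductivePoset {y : β // a ≤ y} inferInstance inferInstance inferInstance)
      (hdel : IsInductivePoset {y : β // y ∈ genSub (atoms β \ {a})}
        inferInstance inferInstance inferInstance)
      (hdvd : charPoly {y : β // a ≤ y} ∣ charPoly {y : β // y ∈ genSub (atoms β \ {a})}) :
      IsInductivePoset β po fin bo

/-- The class of divisional posets: the smallest class of locally geometric
posets containing the one-element poset and closed under:
`P ∈ DP` whenever there is an atom `a` such that `P'' = P_{≥a} ∈ DP`
and `χ_{P''} ∣ χ_P`. -/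
inductive IsDivisionalPoset :
    ∀ (β : Type) (po : PartialOrder β) (fin : Fintype β) (bo : OrderBot β), Prop where
  | triv (β : Type) [po : PartialOrder β] [fin : Fintype β] [bo : OrderBot β]
      (h : ∀ x : β, x = ⊥) : IsDivisionalPoset β po fin bo
  | step (β : Type) [po : PartialOrder β] [fin : Fintype β] [bo : OrderBot β]
      (hLG : IsLocallyGeometric β) (a : β) (ha : a ∈ atoms β)
      (hres : IsDivisionalPoset {y : β // a ≤ y} inferInstance inferInstance inferInstance)
      (hdvd : charPoly {y : β // a ≤ y} ∣ charPoly β) :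
      IsDivisionalPoset β po fin bo

/-- An element `m` of a (geometric) lattice is modular if
`m ∧ (y ∨ z) = (m ∧ y) ∨ z` for all `z ≤ m` and all `y`. Joins and meets are
expressed via `joinSet` and `meetSet`. -/
def IsModular {β : Type*} [PartialOrder β] (m : β) : Prop :=
  ∀ z y j mj my r : β, z ≤ m →
    j ∈ joinSet {y, z} → mj ∈ meetSet {m, j} →
    my ∈ meetSet {m, y} → r ∈ joinSet {my, z} → mj = r

/-- `Q` is an M-ideal of the locally geometric poset `β`. -/
def IsMIdeal (β : Type*) [PartialOrder β] (Q : Set β) : Prop :=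
  IsLowerSet Q ∧
  (∀ x y : β, Maximal (· ∈ Q) x → Maximal (· ∈ Q) y → rk x = rk y) ∧
  (∀ T ⊆ Q, joinSet T ⊆ Q) ∧
  (∀ y ∈ Q, ∀ a ∈ atoms β, a ∉ Q → (joinSet {a, y}).Nonempty) ∧
  (∀ x : β, IsMax x → ∃ y, Maximal (· ∈ Q) y ∧
    ∃ h : y ≤ x, IsModular (⟨y, h⟩ : {u : β // u ≤ x}))

/-- `Q` is a TM-ideal of the locally geometric poset `β`: an M-ideal where
moreover `|a ∨ y| = 1` for `y ∈ Q` and atoms `a ∉ Q`. -/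
def IsTMIdeal (β : Type*) [PartialOrder β] (Q : Set β) : Prop :=
  IsMIdeal β Q ∧ ∀ y ∈ Q, ∀ a ∈ atoms β, a ∉ Q → ∃! z, z ∈ joinSet {a, y}

/-- A locally geometric poset is supersolvable if it admits an M-chain
`{0̂} = Q_0 ⊊ Q_1 ⊊ ⋯ ⊊ Q_r = P` with each `Q_i` an M-ideal of `Q_{i+1}`
and `rk(Q_i) = i`. -/
def IsSupersolvable (β : Type*) [PartialOrder β] [Fintype β] [OrderBot β] : Prop :=
  ∃ Q : Fin (prk β + 1) → Set β,
    Q 0 = {⊥} ∧ Q (Fin.last _) = Set.univ ∧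
    (∀ i : Fin (prk β), Q i.castSucc ⊂ Q i.succ) ∧
    (∀ i : Fin (prk β + 1), prk {y : β // y ∈ Q i} = i) ∧
    ∀ i : Fin (prk β),
      IsMIdeal {y : β // y ∈ Q i.succ} {z : {y : β // y ∈ Q i.succ} | (z : β) ∈ Q i.castSucc}

/-- A locally geometric poset is strictly supersolvable if it admits a
TM-chain as above, with each `Q_i` a TM-ideal of `Q_{i+1}`. -/
def IsStrictlySupersolvable (β : Type*) [PartialOrder β] [Fintype β] [OrderBot β] : Prop :=
  ∃ Q : Fin (prk β + 1) → Set β,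
    Q 0 = {⊥} ∧ Q (Fin.last _) = Set.univ ∧
    (∀ i : Fin (prk β), Q i.castSucc ⊂ Q i.succ) ∧
    (∀ i : Fin (prk β + 1), prk {y : β // y ∈ Q i} = i) ∧
    ∀ i : Fin (prk β),
      IsTMIdeal {y : β // y ∈ Q i.succ} {z : {y : β // y ∈ Q i.succ} | (z : β) ∈ Q i.castSucc}

end PosetArr

end

namespace PosetArr

section Basic
variable {α : Type*} [PartialOrder α] [Finite α]

lemma chainHeight_ne_top (s : Set α) : s.chainHeight (· < ·) ≠ ⊤ :=
  Set.chainHeight_ne_top_of_finite s _ s.toFinite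

lemma rk_le_rk {x y : α} (h : x ≤ y) : rk x ≤ rk y := by
  have := Set.chainHeight_mono (· < ·) _ _ (Set.Iio_subset_Iio h)
  exact ENat.toNat_le_toNat this (chainHeight_ne_top _)

lemma rk_lt_rk {x y : α} (h : x < y) : rk x < rk y := by
  have h1 : (Set.Iio x).chainHeight (· < ·) + 1 ≤ (insert x (Set.Iio x)).chainHeight (· < ·) := by
    obtain ⟨t, hts, hte, htc⟩ := Set.exists_eq_chainHeight_of_finite (Set.Iio x) (· < ·) (Set.toFinite _)
    have hxt : x ∉ t := fun hx => lt_irrefl x (hts hx)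
    rw [← hte, ← Set.encard_insert_of_notMem hxt]
    exact Set.encard_le_chainHeight_of_isChain _ _ (Set.insert_subset_insert hts)
      (htc.insert fun b hb _ => Or.inr (hts hb))
  have h2 : insert x (Set.Iio x) ⊆ Set.Iio y := by
    intro u hu
    rcases hu with rfl | hu
    · exact h
    · exact lt_trans hu h
  have h3 := h1.trans (Set.chainHeight_mono (· < ·) _ _ h2)
  have := ENat.toNat_le_toNat h3 (chainHeight_ne_top _)
  rw [ENat.toNat_add (chainHeight_ne_top _) (by simp)] at this
  simp only [ENat.toNat_one] at this
  unfold rk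
  omega

lemma exists_join_le {S : Set α} {w : α} (hw : w ∈ upperBounds S) :
    ∃ m ∈ joinSet S, m ≤ w := by
  obtain ⟨m, hmw, hm⟩ := Finite.exists_le_minimal (p := fun u => u ∈ upperBounds S ∧ u ≤ w) ⟨hw, le_rfl⟩
  refine ⟨m, ⟨hm.1.1, fun u hu hum => ?_⟩, hm.1.2⟩
  exact le_antisymm hum (hm.2 ⟨hu, hum.trans hm.1.2⟩ hum)

lemma exists_le_meet {S : Set α} {w : α} (hw : w ∈ lowerBounds S) :
    ∃ m ∈ meetSet S, w ≤ m := by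
  obtain ⟨m, hmw, hm⟩ := Finite.exists_le_maximal (p := fun u => u ∈ lowerBounds S ∧ w ≤ u) ⟨hw, le_rfl⟩
  refine ⟨m, ⟨hm.1.1, fun u hu hum => ?_⟩, hm.1.2⟩
  exact le_antisymm (hm.2 ⟨hu, hm.1.2.trans hum⟩ hum) hum

lemma exists_covby_le {u z : α} (h : u < z) : ∃ v, u ≤ v ∧ v ⋖ z := by
  obtain ⟨v, huv, hv⟩ := Finite.exists_le_maximal (p := fun t => u ≤ t ∧ t < z) ⟨le_rfl, h⟩
  refine ⟨v, hv.1.1, hv.1.2, fun c hvc hcz => ?_⟩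
  have := hv.2 ⟨hv.1.1.trans hvc.le, hcz⟩ hvc.le
  exact absurd this (not_le_of_gt hvc)

lemma exists_max_ge (z : α) : ∃ x₀, z ≤ x₀ ∧ IsMax x₀ := by
  obtain ⟨m, hzm, hm⟩ := Finite.exists_le_maximal (p := fun _ : α => True) trivial
  exact ⟨m, hzm, fun b hb => hm.2 trivial hb⟩

end Basic

section Transfer
variable {α : Type*} [PartialOrder α] {K : α → Prop} (hK : ∀ {u v : α}, u ≤ v → K v → K u)
include hK

lemma rk_subtype (x : {u : α // K u}) : rk x = rk x.val := by
  have himg : Subtype.val '' (Set.Iio x) = Set.Iio x.val := by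
    ext u
    constructor
    · rintro ⟨v, hv, rfl⟩; exact hv
    · intro hu; exact ⟨⟨u, hK hu.le x.2⟩, hu, rfl⟩
  have h2 : (Subtype.val '' Set.Iio x).chainHeight (· < ·) = (Set.Iio x).chainHeight (· < ·) :=
    Set.chainHeight_eq_of_relEmbedding (r := (· < ·)) (r' := (· < ·)) _
      ⟨⟨Subtype.val, Subtype.val_injective⟩, Subtype.coe_lt_coe⟩
  rw [himg] at h2
  unfold rk
  rw [h2]

lemma covBy_subtype_iff {x y : {u : α // K u}} : x ⋖ y ↔ x.val ⋖ y.val := by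
  constructor
  · intro h
    refine And.intro h.1 (fun c hxc hcy => ?_)
    have hc : K c := hK hcy.le y.2
    exact h.2 (Subtype.coe_lt_coe.mp (show x.val < (⟨c, hc⟩ : {u // K u}).val from hxc))
      (Subtype.coe_lt_coe.mp (show (⟨c, hc⟩ : {u // K u}).val < y.val from hcy))
  · intro h
    exact And.intro h.1 (fun c hxc hcy => h.2 hxc hcy)

lemma mem_joinSet_subtype_iff {S : Set {u : α // K u}} {m : {u : α // K u}} :
    m ∈ joinSet S ↔ m.val ∈ joinSet (Subtype.val '' S) := by
  constructor
  · rintro ⟨hub, hmin⟩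
    constructor
    · rintro w ⟨s, hs, rfl⟩; exact hub hs
    · intro w hw hwm
      have hKw : K w := hK hwm m.2
      have : (⟨w, hKw⟩ : {u // K u}) ∈ upperBounds S := fun s hs => hw ⟨s, hs, rfl⟩
      exact congrArg Subtype.val (hmin _ this hwm)
  · rintro ⟨hub, hmin⟩
    constructor
    · intro s hs; exact hub ⟨s, hs, rfl⟩
    · intro w hw hwm
      have : w.val ∈ upperBounds (Subtype.val '' S) := by rintro u ⟨s, hs, rfl⟩; exact hw hs
      exact Subtype.ext (hmin _ this hwm)

end Transfer
end PosetArr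

namespace PosetArr
/-- If `Q` is a TM-ideal of a locally geometric poset `P` with
`rk(Q) = rk(P) − 1`, then for any atom `a ∈ A(P) \ A(Q)` the map `x ↦ x ∨ a`
is a poset isomorphism `Q ≃ P_{≥ a}`. -/
theorem tmIdeal_orderIso_upper (α : Type) [PartialOrder α] [Fintype α]
    (hLG : IsLocallyGeometric α) (Q : Set α) (hQ : IsTMIdeal α Q)
    (hrk : prk {y : α // y ∈ Q} + 1 = prk α)
    (a : α) (ha : a ∈ atoms α) (haQ : a ∉ Q) :
    ∃ f : {y : α // y ∈ Q} ≃o {y : α // a ≤ y},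
      ∀ x : {y : α // y ∈ Q}, (f x : α) ∈ joinSet {(x : α), a} := by
  classical
  obtain ⟨⟨hlow, hmaxrk, hjoincl, hnep, hmod⟩, htm⟩ := hQ
  have hK : ∀ {u v : α}, u ≤ v → v ∈ Q → u ∈ Q := fun h hv => hlow h hv
  have hranked := hLG.1
  -- the map x ↦ x ∨ a
  have hEU : ∀ x : {y : α // y ∈ Q}, ∃! z, z ∈ joinSet {a, (x : α)} :=
    fun x => htm x.1 x.2 a ha haQ
  set jx : {y : α // y ∈ Q} → α := fun x => (hEU x).choose with hjxdef
  have hjx : ∀ x : {y : α // y ∈ Q}, jx x ∈ joinSet {a, (x : α)} := fun x => (hEU x).choose_spec.1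
  have hjun : ∀ (x : {y : α // y ∈ Q}) (z : α), z ∈ joinSet {a, (x : α)} → z = jx x := fun x z hz =>
    (hEU x).choose_spec.2 z hz
  have haj : ∀ x : {y : α // y ∈ Q}, a ≤ jx x := fun x => (hjx x).1 (Set.mem_insert _ _)
  have hxj : ∀ x : {y : α // y ∈ Q}, (x : α) ≤ jx x := fun x =>
    (hjx x).1 (Set.mem_insert_of_mem _ rfl)
  have hpairub : ∀ {p q w : α}, p ≤ w → q ≤ w → w ∈ upperBounds {p, q} := by
    intro p q w h1 h2 s hs
    rcases hs with rfl | hs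
    · exact h1
    · rw [Set.mem_singleton_iff] at hs; subst hs; exact h2
  have hjle : ∀ (x : {y : α // y ∈ Q}) (w : α), a ≤ w → (x : α) ≤ w → jx x ≤ w := by
    intro x w h1 h2
    obtain ⟨m, hm, hmw⟩ := exists_join_le (hpairub h1 h2)
    rw [hjun x m hm] at hmw
    exact hmw
  -- rank step
  have hrank : ∀ x : {y : α // y ∈ Q}, rk (jx x) = rk (x : α) + 1 := by
    intro x
    have hGL := hLG.2 (jx x)
    have hKJ : ∀ {u v : α}, u ≤ v → v ≤ jx x → u ≤ jx x := fun h hv => h.trans hv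
    have haJ : a ≤ jx x := haj x
    have hxJ : (x : α) ≤ jx x := hxj x
    have hatom : (⟨a, haJ⟩ : {u : α // u ≤ jx x}) ∈ atoms {u : α // u ≤ jx x} := by
      show rk _ = 1
      rw [rk_subtype hKJ]
      exact ha
    have hnle : ¬ (⟨a, haJ⟩ : {u : α // u ≤ jx x}) ≤ ⟨(x : α), hxJ⟩ := by
      intro h
      exact haQ (hK (show a ≤ (x : α) from h) x.2)
    have hjoin : (⟨jx x, le_rfl⟩ : {u : α // u ≤ jx x}) ∈
        joinSet {(⟨(x : α), hxJ⟩ : {u : α // u ≤ jx x}), ⟨a, haJ⟩} := by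
      rw [mem_joinSet_subtype_iff hKJ, Set.image_pair]
      rw [show ({(x : α), a} : Set α) = {a, (x : α)} from Set.pair_comm _ _]
      exact hjx x
    have hcov := (hGL.2 _ _).mpr ⟨_, hatom, hnle, hjoin⟩
    exact hranked _ _ ((covBy_subtype_iff hKJ).mp hcov)
  -- order reflection
  have hrefl : ∀ x x' : {y : α // y ∈ Q}, jx x ≤ jx x' → (x : α) ≤ (x' : α) := by
    intro x x' hle
    obtain ⟨w, hw, hwle⟩ := exists_join_le (hpairub ((hxj x).trans hle) (hxj x'))
    have hwQ : w ∈ Q := by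
      refine hjoincl {(x : α), (x' : α)} ?_ hw
      intro s hs
      rcases hs with rfl | hs
      · exact x.2
      · rw [Set.mem_singleton_iff] at hs; subst hs; exact x'.2
    have h1 : jx ⟨w, hwQ⟩ ≤ jx x' := hjle ⟨w, hwQ⟩ (jx x') (haj x') hwle
    have h2 : rk (jx ⟨w, hwQ⟩) = rk w + 1 := hrank ⟨w, hwQ⟩
    have h3 : rk (jx x') = rk (x' : α) + 1 := hrank x'
    have hx'w : (x' : α) ≤ w := hw.1 (Set.mem_insert_of_mem _ rfl)
    have hweq : w = (x' : α) := by
      by_contra hne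
      have hlt : (x' : α) < w := lt_of_le_of_ne hx'w (Ne.symm hne)
      have h4 := rk_lt_rk hlt
      have h5 := rk_le_rk h1
      omega
    have hxw : (x : α) ≤ w := hw.1 (Set.mem_insert _ _)
    exact hweq ▸ hxw
  -- rank of maximal elements of Q
  have hyrk : ∀ y', Maximal (· ∈ Q) y' → rk y' + 1 = prk α := by
    intro y' hy'
    have hsub : prk {y : α // y ∈ Q} = rk y' := by
      apply le_antisymm
      · apply Finset.sup_le
        intro q _
        rw [rk_subtype hK]
        obtain ⟨m, hqm, hm⟩ := Finite.exists_le_maximal q.2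
        exact (rk_le_rk hqm).trans (le_of_eq (hmaxrk m y' hm hy'))
      · have h := Finset.le_sup (f := rk (α := {y : α // y ∈ Q}))
          (Finset.mem_univ (⟨y', hy'.1⟩ : {y : α // y ∈ Q}))
        rwa [rk_subtype hK] at h
    omega
  have hrkprk : ∀ x : α, rk x ≤ prk α := fun x => Finset.le_sup (Finset.mem_univ x)
  -- surjectivity
  have hsurj : ∀ z : α, a ≤ z → ∃ x : {y : α // y ∈ Q}, jx x = z := by
    intro z haz
    obtain ⟨x₀, hzx₀, hx₀max⟩ := exists_max_ge z
    obtain ⟨y, hymax, hyx₀, hymod⟩ := hmod x₀ hx₀max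
    have hyQ : y ∈ Q := hymax.1
    have hax₀ : a ≤ x₀ := haz.trans hzx₀
    have hcoatom : ∀ v : α, y < v → v ≤ x₀ → v = x₀ := by
      intro v hyv hvx₀
      have h1 : rk y < rk v := rk_lt_rk hyv
      have h2 : rk v ≤ prk α := hrkprk v
      have h3 := hyrk y hymax
      by_contra hne
      have h4 := rk_lt_rk (lt_of_le_of_ne hvx₀ hne)
      have h5 := hrkprk x₀
      omega
    obtain ⟨hLat, hGeom⟩ := hLG.2 x₀
    -- lattice operations on L = {u // u ≤ x₀}
    set L := {u : α // u ≤ x₀} with hLdef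
    set Jn : L → L → L := fun p q => (hLat p q).1.choose with hJndef
    have hJn : ∀ p q, Jn p q ∈ joinSet {p, q} := fun p q => (hLat p q).1.choose_spec.1
    have hJnu : ∀ p q w, w ∈ joinSet {p, q} → w = Jn p q := fun p q w hw =>
      (hLat p q).1.choose_spec.2 w hw
    set Mn : L → L → L := fun p q => (hLat p q).2.choose with hMndef
    have hMn : ∀ p q, Mn p q ∈ meetSet {p, q} := fun p q => (hLat p q).2.choose_spec.1
    have hMnu : ∀ p q w, w ∈ meetSet {p, q} → w = Mn p q := fun p q w hw =>
      (hLat p q).2.choose_spec.2 w hw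
    have hpairubL : ∀ {p q w : L}, p ≤ w → q ≤ w → w ∈ upperBounds {p, q} := by
      intro p q w h1 h2 s hs
      rcases hs with rfl | hs
      · exact h1
      · rw [Set.mem_singleton_iff] at hs; subst hs; exact h2
    have hpairlbL : ∀ {p q w : L}, w ≤ p → w ≤ q → w ∈ lowerBounds {p, q} := by
      intro p q w h1 h2 s hs
      rcases hs with rfl | hs
      · exact h1
      · rw [Set.mem_singleton_iff] at hs; subst hs; exact h2
    have hJnle : ∀ p q (w : L), p ≤ w → q ≤ w → Jn p q ≤ w := by
      intro p q w h1 h2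
      obtain ⟨m, hm, hmw⟩ := exists_join_le (hpairubL h1 h2)
      rw [hJnu p q m hm] at hmw
      exact hmw
    have hMnge : ∀ p q (w : L), w ≤ p → w ≤ q → w ≤ Mn p q := by
      intro p q w h1 h2
      obtain ⟨m, hm, hmw⟩ := exists_le_meet (hpairlbL h1 h2)
      rw [hMnu p q m hm] at hmw
      exact hmw
    have hJnl : ∀ p q, p ≤ Jn p q := fun p q => (hJn p q).1 (Set.mem_insert _ _)
    have hJnr : ∀ p q, q ≤ Jn p q := fun p q => (hJn p q).1 (Set.mem_insert_of_mem _ rfl)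
    have hMnl : ∀ p q, Mn p q ≤ p := fun p q => (hMn p q).1 (Set.mem_insert _ _)
    have hMnr : ∀ p q, Mn p q ≤ q := fun p q => (hMn p q).1 (Set.mem_insert_of_mem _ rfl)
    have hJn_self : ∀ p q : L, q ≤ p → Jn p q = p := by
      intro p q h
      refine (hJnu p q p ⟨hpairubL le_rfl h, fun w hw hwp => le_antisymm hwp (hw (Set.mem_insert _ _))⟩).symm
    -- the elements
    set Y : L := ⟨y, hyx₀⟩ with hYdef
    set Z : L := ⟨z, hzx₀⟩ with hZdef
    set A : L := ⟨a, hax₀⟩ with hAdef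
    set X : L := Mn Y Z with hXdef
    have hXQ : X.val ∈ Q := hK (show X.val ≤ y from hMnl Y Z) hyQ
    set xq : {y : α // y ∈ Q} := ⟨X.val, hXQ⟩ with hxqdef
    refine ⟨xq, ?_⟩
    have hjz : jx xq ≤ z := by
      have hXz : (xq : α) ≤ z := hMnr Y Z
      exact hjle xq z haz hXz
    by_contra hne
    have hjltz : jx xq < z := lt_of_le_of_ne hjz hne
    have hjx₀ : jx xq ≤ x₀ := hjz.trans hzx₀
    set J : L := ⟨jx xq, hjx₀⟩ with hJdef
    have hJZ : J < Z := Subtype.coe_lt_coe.mp hjltz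
    obtain ⟨U, hJU, hUZ⟩ := exists_covby_le hJZ
    obtain ⟨B, hBatom, hBU, hZjoin⟩ := (hGeom U Z).mp hUZ
    have hBZ : B ≤ Z := hZjoin.1 (Set.mem_insert_of_mem _ rfl)
    have hBJ : ¬ B ≤ J := fun h => hBU (h.trans hJU)
    have hAJ : A ≤ J := Subtype.coe_le_coe.mp (haj xq)
    have hXJ : X ≤ J := Subtype.coe_le_coe.mp (hxj xq)
    have hAY : ¬ A ≤ Y := fun h => haQ (hK (show a ≤ y from h) hyQ)
    have htop : ∀ w : L, w ∈ upperBounds {J, Y} → ∀ u : L, u ≤ w := by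
      intro w hw u
      have hYw : Y ≤ w := hw (Set.mem_insert_of_mem _ rfl)
      have hJw : J ≤ w := hw (Set.mem_insert _ _)
      have hAw : A ≤ w := hAJ.trans hJw
      have hYne : Y ≠ w := fun h => hAY (h ▸ hAw)
      have hYlt' : Y < w := lt_of_le_of_ne hYw hYne
      have hweq : w.val = x₀ := hcoatom w.val (Subtype.coe_lt_coe.mpr hYlt') w.2
      have huw : u.val ≤ w.val := by rw [hweq]; exact u.2
      exact Subtype.coe_le_coe.mp huw
    have hCY : Y ≤ Y ∧ B ≤ Jn J Y := by
      refine ⟨le_rfl, htop (Jn J Y) (hJn J Y).1 B⟩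
    obtain ⟨c, hcle, hcmin⟩ :=
      Finite.exists_le_minimal (p := fun c : L => c ≤ Y ∧ B ≤ Jn J c) hCY
    have hcY : c ≤ Y := hcmin.1.1
    have hBc : B ≤ Jn J c := hcmin.1.2
    by_cases hex : ∃ u : L, u < c
    · obtain ⟨u, hu⟩ := hex
      obtain ⟨c', hc'1, hc'c⟩ := exists_covby_le hu
      obtain ⟨t, htatom, htc', hcjoin⟩ := (hGeom c' c).mp hc'c
      have htc : t ≤ c := hcjoin.1 (Set.mem_insert_of_mem _ rfl)
      have hc'Y : c' ≤ Y := hc'c.1.le.trans hcY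
      have htY : t ≤ Y := htc.trans hcY
      set W : L := Jn J c' with hWdef
      have hBW : ¬ B ≤ W := by
        intro h
        exact absurd (hcmin.2 ⟨hc'Y, h⟩ hc'c.1.le) (not_le_of_gt hc'c.1)
      set V1 : L := Jn J c with hV1def
      set V2 : L := Jn W t with hV2def
      have hcle2 : ∀ w : L, c' ≤ w → t ≤ w → c ≤ w := by
        intro w h1 h2
        have := hJnu c' t c hcjoin
        rw [this]
        exact hJnle c' t w h1 h2
      have hV12 : V1 = V2 := by
        apply le_antisymm
        · refine hJnle J c V2 ((hJnl J c').trans (hJnl W t)) ?_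
          exact hcle2 V2 ((hJnr J c').trans (hJnl W t)) (hJnr W t)
        · refine hJnle W t V1 ?_ (htc.trans (hJnr J c))
          exact hJnle J c' V1 (hJnl J c) (hc'c.1.le.trans (hJnr J c))
      have htW : ¬ t ≤ W := by
        intro h
        have hV2W : V2 = W := by rw [hV2def]; exact hJn_self W t h
        exact hBW ((hBc.trans_eq hV12).trans_eq hV2W)
      have hcov2 : W ⋖ V2 := (hGeom W V2).mpr ⟨t, htatom, htW, hJn W t⟩
      set V3 : L := Jn W B with hV3def
      have hcov3 : W ⋖ V3 := (hGeom W V3).mpr ⟨B, hBatom, hBW, hJn W B⟩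
      have hV32 : V3 ≤ V2 := hJnle W B V2 (by rw [hV2def]; exact hJnl W t) (hBc.trans_eq hV12)
      have hV3eq : V3 = V2 := by
        rcases lt_or_eq_of_le hV32 with h | h
        · exact absurd h (hcov2.2 hcov3.1)
        · exact h
      have htV3 : t ≤ V3 := by rw [hV3eq, hV2def]; exact hJnr W t
      set G : L := Jn Z c' with hGdef
      have hJZle : J ≤ Z := hJZ.le
      have hWG : W ≤ G := hJnle J c' G (hJZle.trans (hJnl Z c')) (hJnr Z c')
      have hV3G : V3 ≤ G := hJnle W B G hWG (hBZ.trans (hJnl Z c'))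
      have htG : t ≤ G := htV3.trans hV3G
      have htMG : t ≤ Mn Y G := hMnge Y G t htY htG
      have hlaw : Mn Y G = Jn X c' :=
        hymod c' Z G (Mn Y G) X (Jn X c') hc'Y (hJn Z c') (hMn Y G) (hMn Y Z) (hJn X c')
      have htWle : t ≤ W := by
        calc t ≤ Mn Y G := htMG
        _ = Jn X c' := hlaw
        _ ≤ W := hJnle X c' W (hXJ.trans (hJnl J c')) (hJnr J c')
      exact htW htWle
    · push_neg at hex
      have hcJ : c ≤ J := by
        have heq : Mn c J = c := ((hMnl c J).lt_or_eq).resolve_left (hex _)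
        rw [← heq]
        exact hMnr c J
      rw [hJn_self J c hcJ] at hBc
      exact hBJ hBc
  -- assemble the order isomorphism
  set F : {y : α // y ∈ Q} → {y : α // a ≤ y} := fun x => ⟨jx x, haj x⟩ with hFdef
  have hFbij : Function.Bijective F := by
    constructor
    · intro x x' h
      have hjj : jx x = jx x' := congrArg Subtype.val h
      exact Subtype.ext (le_antisymm (hrefl x x' hjj.le) (hrefl x' x hjj.ge))
    · intro z
      obtain ⟨x, hx⟩ := hsurj z.1 z.2
      exact ⟨x, Subtype.ext hx⟩
  refine ⟨⟨Equiv.ofBijective F hFbij, ?_⟩, ?_⟩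
  · intro x x'
    constructor
    · intro h
      exact hrefl x x' h
    · intro h
      exact hjle x (jx x') (haj x') (le_trans h (hxj x'))
  · intro x
    rw [show ({(x : α), a} : Set α) = {a, (x : α)} from Set.pair_comm _ _]
    exact hjx x

end PosetArr
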